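/- arXiv:1606.06417 — 11 statements merged into one kernel-verified Lean document; each statement's English description precedes it below -/
import Mathlib

section
/- Let S ⊆ A^A be a fully-transpositional function semigroup. If S contains a function f such that range(f) is finite and range(f) ≠ A, then S contains a constant function. -/
theorem aux1 {A : Type*} [DecidableEq A] (S : Set (A → A))
    (hcomp : ∀ f ∈ S, ∀ g ∈ S, f ∘ g ∈ S)
    (hFT : ∀ a b : A, a ≠ b → ⇑(Equiv.swap a b) ∈ S) :
    ∀ n : ℕ, ∀ f ∈ S, (Set.range f).Finite → Set.range f ≠ Set.univ →
      (Set.range f).ncard ≤ n → ∃ g ∈ S, ∃ c : A, ∀ x, g x = c := by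
  intro n
  induction n with
  | zero =>
    intro f hf hfin hrng hcard
    exfalso
    obtain ⟨a, ha⟩ : ∃ a, a ∉ Set.range f := by
      by_contra h
      push_neg at h
      exact hrng (Set.eq_univ_of_forall h)
    have hpos : 0 < (Set.range f).ncard :=
      (Set.ncard_pos hfin).2 ⟨f a, a, rfl⟩
    omega
  | succ n ih =>
    intro f hf hfin hrng hcard
    rcases le_or_gt (Set.range f).ncard n with hle | hgt
    · exact ih f hf hfin hrng hle
    have hcard' : (Set.range f).ncard = n + 1 := le_antisymm hcard hgt
    obtain ⟨a, ha⟩ : ∃ a, a ∉ Set.range f := by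
      by_contra h
      push_neg at h
      exact hrng (Set.eq_univ_of_forall h)
    rcases Nat.eq_zero_or_pos n with hn | hn
    · -- range has one element: f is constant
      subst hn
      obtain ⟨c, hc⟩ := Set.ncard_eq_one.1 hcard'
      refine ⟨f, hf, c, fun x => ?_⟩
      have : f x ∈ Set.range f := ⟨x, rfl⟩
      rw [hc] at this
      exact this
    set R := Set.range f with hR
    have hsub : f '' R ⊆ R := by
      rintro _ ⟨x, _, rfl⟩
      exact ⟨x, rfl⟩
    by_cases hinj : Set.InjOn f R
    · -- f is a bijection on R
      have himg : f '' R = R := by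
        apply Set.eq_of_subset_of_ncard_le hsub _ hfin
        rw [Set.ncard_image_of_injOn hinj]
      have hfa : f a ∈ R := ⟨a, rfl⟩
      obtain ⟨e, heR, hene⟩ : ∃ e, e ∈ R ∧ e ≠ f a :=
        Set.exists_ne_of_one_lt_ncard (by omega) (f a)
      obtain ⟨d, hdR, hfd⟩ : ∃ d ∈ R, f d = e := by
        rw [← himg] at heR; exact heR
      have hda : a ≠ d := fun h => ha (h ▸ hdR)
      set σ := ⇑(Equiv.swap a d) with hσ
      have hσS : σ ∈ S := hFT a d hda
      have hgS : f ∘ (σ ∘ f) ∈ S := hcomp f hf _ (hcomp σ hσS f hf)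
      set g := f ∘ (σ ∘ f) with hg
      -- range g ⊆ f '' (R \ {d})
      have hrg : Set.range g ⊆ f '' (R \ {d}) := by
        rintro _ ⟨x, rfl⟩
        by_cases hxd : f x = d
        · have : g x = f a := by
            simp [hg, hσ, hxd, Equiv.swap_apply_right]
          rw [this]
          obtain ⟨y, hyR, hyfa⟩ : ∃ y ∈ R, f y = f a := by
            rw [← himg] at hfa; exact hfa
          have hyd : y ≠ d := fun h => hene (by rw [← hfd, ← h, hyfa])
          exact ⟨y, ⟨hyR, hyd⟩, hyfa⟩
        · have hxa : f x ≠ a := fun h => ha (h ▸ ⟨x, rfl⟩)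
          have : g x = f (f x) := by
            simp [hg, hσ, Equiv.swap_apply_of_ne_of_ne hxa hxd]
          rw [this]
          exact ⟨f x, ⟨⟨x, rfl⟩, hxd⟩, rfl⟩
      have hfin2 : (f '' (R \ {d})).Finite := (hfin.subset Set.diff_subset).image f
      have hfing : (Set.range g).Finite := hfin2.subset hrg
      have hcard2 : (f '' (R \ {d})).ncard = n := by
        rw [Set.ncard_image_of_injOn (hinj.mono Set.diff_subset),
          Set.ncard_diff_singleton_of_mem hdR]
        omega
      have hcardg : (Set.range g).ncard ≤ n := by
        rw [← hcard2]
        exact Set.ncard_le_ncard hrg hfin2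
      have hrngg : Set.range g ≠ Set.univ := by
        intro h
        have : a ∈ Set.range g := h ▸ Set.mem_univ a
        obtain ⟨y, ⟨hyR, _⟩, hya⟩ := hrg this
        exact ha (hya ▸ ⟨y, rfl⟩)
      exact ih g hgS hfing hrngg hcardg
    · -- f not injective on R: use f ∘ f
      have hgS : f ∘ f ∈ S := hcomp f hf f hf
      have hrg : Set.range (f ∘ f) = f '' R := by
        rw [Set.range_comp]
      have hfin2 : (f '' R).Finite := hfin.image f
      have hlt : (f '' R).ncard < R.ncard := by
        rcases lt_or_ge (f '' R).ncard R.ncard with h | h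
        · exact h
        · exfalso
          have heq : f '' R = R := Set.eq_of_subset_of_ncard_le hsub h hfin
          exact hinj (Set.injOn_of_ncard_image_eq (by rw [heq]) hfin)
      have hcardg : (Set.range (f ∘ f)).ncard ≤ n := by
        rw [hrg]; omega
      have hrngg : Set.range (f ∘ f) ≠ Set.univ := by
        intro h
        have : a ∈ Set.range (f ∘ f) := h ▸ Set.mem_univ a
        rw [hrg] at this
        exact ha (hsub this)
      exact ih (f ∘ f) hgS (hrg ▸ hfin2) hrngg hcardg

theorem stmt1 {A : Type*} [DecidableEq A] (S : Set (A → A))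
    (hne : S.Nonempty)
    (hcomp : ∀ f ∈ S, ∀ g ∈ S, f ∘ g ∈ S)
    (hFT : ∀ a b : A, a ≠ b → ⇑(Equiv.swap a b) ∈ S)
    (f : A → A) (hf : f ∈ S)
    (hfin : (Set.range f).Finite) (hrng : Set.range f ≠ Set.univ) :
    ∃ g ∈ S, ∃ c : A, ∀ x, g x = c := by
  exact aux1 S hcomp hFT (Set.range f).ncard f hf hfin hrng le_rfl
end

section
/- Let S ⊆ A^A be a fully-transpositional function semigroup with |A| ≥ 3, containing a semi-constant function that is not constant. Then for all a, d, p ∈ A with a ≠ p and d ≠ p, there exists a semi-constant g ∈ S with cnst(g) = a, d ∈ Cnst-dom(g), and p ∉ Cnst-dom(g). -/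
/-- `f` is semi-constant with constant value `c`: there is a set `B` with at
least two elements on which `f` is constantly `c`, and `f` is the identity
outside `B`. -/
def SemiConstWith {A : Type*} (f : A → A) (c : A) : Prop :=
  ∃ B : Set A, B.Nontrivial ∧ (∀ x ∈ B, f x = c) ∧ ∀ x ∉ B, f x = x

private lemma conj_mem {A : Type*} [DecidableEq A] (S : Set (A → A))
    (hcomp : ∀ f ∈ S, ∀ g ∈ S, f ∘ g ∈ S)
    (hFT : ∀ a b : A, a ≠ b → ⇑(Equiv.swap a b) ∈ S)
    {k : A → A} (hk : k ∈ S) (x y : A) :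
    ⇑(Equiv.swap x y) ∘ k ∘ ⇑(Equiv.swap x y) ∈ S := by
  by_cases hxy : x = y
  · subst hxy
    simpa [Equiv.swap_self, Function.comp_def] using hk
  · exact hcomp _ (hFT x y hxy) _ (hcomp _ hk _ (hFT x y hxy))

theorem stmt3 {A : Type*} [DecidableEq A] (S : Set (A → A))
    (hne : S.Nonempty)
    (hcomp : ∀ f ∈ S, ∀ g ∈ S, f ∘ g ∈ S)
    (hFT : ∀ a b : A, a ≠ b → ⇑(Equiv.swap a b) ∈ S)
    (hcard : ∃ x y z : A, x ≠ y ∧ x ≠ z ∧ y ≠ z)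
    (hsc : ∃ h ∈ S, (∃ c, SemiConstWith h c) ∧ ¬ ∃ c, ∀ x, h x = c)
    (a d p : A) (hap : a ≠ p) (hdp : d ≠ p) :
    ∃ g ∈ S, SemiConstWith g a ∧ g d = a ∧ g p ≠ a := by
  obtain ⟨h, hh, ⟨c, B, hBnt, hBc, hBid⟩, hnc⟩ := hsc
  -- a point q with h q ≠ c
  obtain ⟨q, hqc⟩ : ∃ q, h q ≠ c := by
    by_contra hq; push_neg at hq; exact hnc ⟨c, hq⟩
  have hqB : q ∉ B := fun hmem => hqc (hBc q hmem)
  have hqid : h q = q := hBid q hqB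
  have hqc' : q ≠ c := by rw [hqid] at hqc; exact hqc
  -- a point b ∈ B with b ≠ c
  obtain ⟨b₁, hb₁, b₂, hb₂, hbne⟩ := hBnt
  obtain ⟨b, hbB, hbc⟩ : ∃ b ∈ B, b ≠ c := by
    rcases eq_or_ne b₁ c with rfl | h1
    · exact ⟨b₂, hb₂, fun e => hbne (e ▸ rfl)⟩
    · exact ⟨b₁, hb₁, h1⟩
  have hbq : b ≠ q := fun e => hqB (e ▸ hbB)
  -- the three swaps
  set σ₁ : Equiv.Perm A := Equiv.swap c a with hσ₁
  set b1 : A := σ₁ b with hb1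
  set q1 : A := σ₁ q with hq1'
  set d' : A := if d = a then b1 else d with hd'
  set σ₂ : Equiv.Perm A := Equiv.swap b1 d' with hσ₂
  set q2 : A := σ₂ q1 with hq2'
  set σ₃ : Equiv.Perm A := Equiv.swap q2 p with hσ₃
  have hb1a : b1 ≠ a := fun e =>
    hbc (σ₁.injective (e.trans (Equiv.swap_apply_left c a).symm))
  have hq1a : q1 ≠ a := fun e =>
    hqc' (σ₁.injective (e.trans (Equiv.swap_apply_left c a).symm))
  have hd'a : d' ≠ a := by
    rcases eq_or_ne d a with hda | hda
    · simp only [hd', if_pos hda]; exact hb1a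
    · simp only [hd', if_neg hda]; exact hda
  have hσ₂a : σ₂ a = a := Equiv.swap_apply_of_ne_of_ne hb1a.symm hd'a.symm
  have hq2a : q2 ≠ a := fun e => hq1a (σ₂.injective (e.trans hσ₂a.symm))
  have hσ₃a : σ₃ a = a := Equiv.swap_apply_of_ne_of_ne hq2a.symm hap
  -- abbreviation for the conjugating permutation
  set τ : A → A := fun x => σ₃ (σ₂ (σ₁ x)) with hτ
  have hτinj : Function.Injective τ := fun x y e =>
    σ₁.injective (σ₂.injective (σ₃.injective e))
  have hτc : τ c = a := by
    simp only [hτ]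
    rw [show σ₁ c = a from Equiv.swap_apply_left c a, hσ₂a, hσ₃a]
  have hτq : τ q = p := by
    simp only [hτ, ← hq1', ← hq2']
    exact Equiv.swap_apply_left q2 p
  have hsymm : ∀ x, σ₁ (σ₂ (σ₃ (τ x))) = x := by
    intro x
    simp only [hτ, hσ₃, hσ₂, hσ₁, Equiv.swap_apply_self]
  have hsymm' : ∀ x, τ (σ₁ (σ₂ (σ₃ x))) = x := by
    intro x
    simp only [hτ, hσ₃, hσ₂, hσ₁, Equiv.swap_apply_self]
  -- the conjugated function
  set g : A → A := ⇑σ₃ ∘ ⇑σ₂ ∘ ⇑σ₁ ∘ h ∘ ⇑σ₁ ∘ ⇑σ₂ ∘ ⇑σ₃ with hg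
  have hgS : g ∈ S :=
    conj_mem S hcomp hFT (conj_mem S hcomp hFT (conj_mem S hcomp hFT hh c a) b1 d') q2 p
  have hgapp : ∀ x, g x = τ (h (σ₁ (σ₂ (σ₃ x)))) := fun x => rfl
  set B' : Set A := τ '' B with hB'
  have hconst : ∀ x ∈ B', g x = a := by
    rintro x ⟨y, hy, rfl⟩
    rw [hgapp, hsymm, hBc y hy, hτc]
  have hid : ∀ x ∉ B', g x = x := by
    intro x hx
    have hyB : σ₁ (σ₂ (σ₃ x)) ∉ B := fun hmem => hx ⟨_, hmem, hsymm' x⟩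
    rw [hgapp, hBid _ hyB, hsymm']
  have hga : g a = a := by
    by_cases ha : a ∈ B'
    · exact hconst a ha
    · exact hid a ha
  have hpB' : p ∉ B' := by
    rintro ⟨y, hy, hyp⟩
    exact hqB ((hτinj (hτq.trans hyp.symm)) ▸ hy)
  refine ⟨g, hgS, ⟨B', ?_, hconst, hid⟩, ?_, ?_⟩
  · exact ⟨τ b₁, ⟨b₁, hb₁, rfl⟩, τ b₂, ⟨b₂, hb₂, rfl⟩, fun e => hbne (hτinj e)⟩
  · rcases eq_or_ne d a with rfl | hda
    · exact hga
    · have hτb : τ b = d := by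
        simp only [hτ, ← hb1]
        have h2 : σ₂ b1 = d := by
          rw [hσ₂, Equiv.swap_apply_left, hd', if_neg hda]
        rw [h2]
        refine Equiv.swap_apply_of_ne_of_ne ?_ hdp
        intro e
        have : σ₂ q1 = σ₂ b1 := by rw [← hq2', h2, e]
        exact hbq.symm (σ₁.injective (σ₂.injective this))
      exact hconst d ⟨b, hbB, hτb⟩
  · rw [hid p hpB']
    exact fun e => hap e.symm
end

section
/- Let S ⊆ A^A be a fully-transpositional function semigroup, f ∈ S a semi-constant function that is not constant, and b ∈ A. Then b = cnst(f) if and only if (i) |[b]_f| ≥ 2 and (ii) for every a ∈ A \ [b]_f, (f ∘ ⟨a b⟩)³ = f ∘ ⟨a b⟩, where ⟨a b⟩ denotes the transposition swapping a and b and [b]_f = {x ∈ A : f(x) = f(b)}. -/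
theorem stmt4 {A : Type*} [DecidableEq A] (S : Set (A → A))
    (hne : S.Nonempty)
    (hcomp : ∀ f ∈ S, ∀ g ∈ S, f ∘ g ∈ S)
    (hFT : ∀ a b : A, a ≠ b → ⇑(Equiv.swap a b) ∈ S)
    (f : A → A) (hf : f ∈ S)
    (hsc : ∃ c, SemiConstWith f c) (hnc : ¬ ∃ c, ∀ x, f x = c) (b : A) :
    SemiConstWith f b ↔
      ({x : A | f x = f b}.Nontrivial ∧
        ∀ a : A, f a ≠ f b →
          (f ∘ ⇑(Equiv.swap a b)) ∘ (f ∘ ⇑(Equiv.swap a b)) ∘ (f ∘ ⇑(Equiv.swap a b)) =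
            f ∘ ⇑(Equiv.swap a b)) := by
  obtain ⟨c, B, hBnt, hB, hB'⟩ := hsc
  have hfc : f c = c := by
    by_cases h : c ∈ B
    · exact hB c h
    · exact hB' c h
  -- uniqueness of the constant value
  have huniq : ∀ b', SemiConstWith f b' → b' = c := by
    rintro b' ⟨B', hB'nt, h1, h2⟩
    obtain ⟨x, hx, y, hy, hxy⟩ := hB'nt
    have hz : ∃ z ∈ B', z ≠ b' := by
      by_cases hxb : x = b'
      · exact ⟨y, hy, fun h => hxy (hxb.trans h.symm)⟩
      · exact ⟨x, hx, hxb⟩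
    obtain ⟨z, hzB', hzb⟩ := hz
    have hfz : f z = b' := h1 z hzB'
    have hzB : z ∈ B := by
      by_contra h
      rw [hB' z h] at hfz
      exact hzb hfz
    exact hfz.symm.trans (hB z hzB)
  -- a point where f is not c
  obtain ⟨a0, ha0⟩ : ∃ a, f a ≠ c := by
    by_contra h
    push_neg at h
    exact hnc ⟨c, h⟩
  have ha0B : a0 ∉ B := fun h => ha0 (hB a0 h)
  have hfa0 : f a0 = a0 := hB' a0 ha0B
  constructor
  · intro hsb
    have hbc : b = c := huniq b hsb
    subst hbc
    constructor
    · refine hBnt.mono (fun x hx => ?_)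
      show f x = f b
      rw [hfc, hB x hx]
    · intro a ha
      rw [hfc] at ha
      have haB : a ∉ B := fun h => ha (hB a h)
      have hfa : f a = a := hB' a haB
      have hab : a ≠ b := fun h => ha (by rw [h, hfc])
      have h1 : f (Equiv.swap a b a) = b := by rw [Equiv.swap_apply_left]; exact hfc
      have h2 : f (Equiv.swap a b b) = a := by rw [Equiv.swap_apply_right]; exact hfa
      have h3 : ∀ x, x ≠ a → x ≠ b → f (Equiv.swap a b x) = f x := fun x hx1 hx2 => by
        rw [Equiv.swap_apply_of_ne_of_ne hx1 hx2]
      funext x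
      simp only [Function.comp_apply]
      by_cases hxa : x = a
      · subst hxa
        rw [h1, h2, h1]
      · by_cases hxb : x = b
        · subst hxb
          rw [h2, h1, h2]
        · rw [h3 x hxa hxb]
          by_cases hxB : x ∈ B
          · rw [hB x hxB, h2, h1]
          · rw [hB' x hxB, h3 x hxa hxb, hB' x hxB, h3 x hxa hxb, hB' x hxB]
  · rintro ⟨hnt, hii⟩
    suffices hbc : b = c by
      subst hbc; exact ⟨B, hBnt, hB, hB'⟩
    by_cases hbc : b = c
    · exact hbc
    · exfalso
      by_cases hbB : b ∈ B
      · -- f b = c, use a0 to contradict (ii)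
        have hfb : f b = c := hB b hbB
        have ha0b : f a0 ≠ f b := by rw [hfb, hfa0]; exact fun h => ha0 (hfa0.trans h)
        have heq := congrFun (hii a0 ha0b) b
        simp only [Function.comp_apply] at heq
        have s1 : f (Equiv.swap a0 b b) = a0 := by rw [Equiv.swap_apply_right]; exact hfa0
        have ha0c : a0 ≠ c := fun h => ha0 (hfa0.trans h)
        have s2 : f (Equiv.swap a0 b a0) = c := by rw [Equiv.swap_apply_left]; exact hfb
        have s3 : f (Equiv.swap a0 b c) = c := by
          rw [Equiv.swap_apply_of_ne_of_ne (fun h => ha0c h.symm) (fun h => hbc h.symm)]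
          exact hfc
        rw [s1, s2, s3] at heq
        exact ha0c heq.symm
      · -- f b = b, class is a singleton, contradict nontriviality
        have hfb : f b = b := hB' b hbB
        obtain ⟨x, hx, y, hy, hxy⟩ := hnt
        have single : ∀ z, f z = f b → z = b := by
          intro z hz
          rw [hfb] at hz
          by_cases hzB : z ∈ B
          · exact absurd ((hB z hzB).symm.trans hz).symm hbc
          · rw [hB' z hzB] at hz; exact hz
        exact hxy ((single x hx).trans (single y hy).symm)
end

section
/- Let S be a fully-transpositional semigroup on A which contains a semi-constant function but no constant function, let f ∈ S and b ∈ A with f(b) a fixed point of f. Then there exists a ∈ [b]_f such that for every semi-constant g ∈ S with [a]_g = {a} and cnst(g) ∉ [b]_f, we have [b]_{f∘g∘f} ⊆ [b]_{f²}. -/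
theorem stmt5 {A : Type*} [DecidableEq A] (S : Set (A → A))
    (hne : S.Nonempty)
    (hcomp : ∀ f ∈ S, ∀ g ∈ S, f ∘ g ∈ S)
    (hFT : ∀ a b : A, a ≠ b → ⇑(Equiv.swap a b) ∈ S)
    (hsc : ∃ h ∈ S, ∃ c, SemiConstWith h c)
    (hnoconst : ∀ h ∈ S, ¬ ∃ c, ∀ x, h x = c)
    (f : A → A) (hf : f ∈ S) (b : A) (hb : f (f b) = f b) :
    ∃ a : A, f a = f b ∧
      ∀ g ∈ S, (∃ c, SemiConstWith g c) →
        (∀ x, g x = g a → x = a) →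
        (∀ c, SemiConstWith g c → f c ≠ f b) →
        ∀ x, f (g (f x)) = f (g (f b)) → f (f x) = f (f b) := by
  refine ⟨f b, hb, ?_⟩
  rintro g hg ⟨c, B, hBnt, hBc, hBid⟩ hsing hc x hx
  -- f b ∉ B, else the g-class of f b contains all of B, contradicting singleton class
  have hfbB : f b ∉ B := by
    intro hmem
    obtain ⟨y, hy, z, hz, hyz⟩ := hBnt
    have hy' : y = f b := hsing y (by rw [hBc y hy, hBc (f b) hmem])
    have hz' : z = f b := hsing z (by rw [hBc z hz, hBc (f b) hmem])
    exact hyz (hy'.trans hz'.symm)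
  have hgfb : g (f b) = f b := hBid (f b) hfbB
  by_cases hfx : f x ∈ B
  · exfalso
    apply hc c ⟨B, hBnt, hBc, hBid⟩
    rw [hBc (f x) hfx, hgfb] at hx
    rw [hx, hb]
  · rw [hBid (f x) hfx, hgfb] at hx
    exact hx
end

section
/- Let S be a fully-transpositional semigroup on A (|A| ≥ 3) containing a semi-constant function but no constant function, let f ∈ S and b ∈ A, and suppose f(b) is not a fixed point of f. Then for every a ∈ [b]_f there exists a semi-constant g ∈ S with [a]_g = {a} and cnst(g) ∉ [b]_f, such that [b]_{f∘g∘f} ⊄ [b]_{f²}. -/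
lemma perm3_mem {A : Type*} [DecidableEq A] (S : Set (A → A))
    (hcomp : ∀ f ∈ S, ∀ g ∈ S, f ∘ g ∈ S)
    (swS : ∀ x y : A, ⇑(Equiv.swap x y) ∈ S)
    (p1 p2 p3 q1 q2 q3 : A) (hp12 : p1 ≠ p2) (hp13 : p1 ≠ p3) (hp23 : p2 ≠ p3)
    (hq12 : q1 ≠ q2) (hq13 : q1 ≠ q3) (hq23 : q2 ≠ q3) :
    ∃ π : Equiv.Perm A, π p1 = q1 ∧ π p2 = q2 ∧ π p3 = q3 ∧
      ∀ h ∈ S, (⇑π ∘ h ∘ ⇑π.symm) ∈ S := by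
  set τ1 := Equiv.swap p1 q1 with hτ1
  set τ2 := Equiv.swap (τ1 p2) q2 with hτ2
  set τ3 := Equiv.swap (τ2 (τ1 p3)) q3 with hτ3
  have e1 : τ1 p1 = q1 := Equiv.swap_apply_left _ _
  have e2 : τ2 (τ1 p2) = q2 := Equiv.swap_apply_left _ _
  have e3 : τ3 (τ2 (τ1 p3)) = q3 := Equiv.swap_apply_left _ _
  have n1 : q1 ≠ τ1 p2 := by
    rw [← e1]; exact fun e => hp12 (τ1.injective e)
  have m1 : τ2 q1 = q1 := Equiv.swap_apply_of_ne_of_ne n1 hq12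
  have f1 : τ2 (τ1 p1) = q1 := by rw [e1, m1]
  have n2 : q1 ≠ τ2 (τ1 p3) := by
    rw [← f1]; exact fun e => hp13 (τ1.injective (τ2.injective e))
  have n2' : q2 ≠ τ2 (τ1 p3) := by
    rw [← e2]; exact fun e => hp23 (τ1.injective (τ2.injective e))
  have m2 : τ3 q1 = q1 := Equiv.swap_apply_of_ne_of_ne n2 hq13
  have m2' : τ3 q2 = q2 := Equiv.swap_apply_of_ne_of_ne n2' hq23
  refine ⟨(τ1.trans τ2).trans τ3, ?_, ?_, ?_, ?_⟩
  · show τ3 (τ2 (τ1 p1)) = q1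
    rw [f1, m2]
  · show τ3 (τ2 (τ1 p2)) = q2
    rw [e2, m2']
  · exact e3
  · intro h hh
    have hmem : (⇑τ3 ∘ (⇑τ2 ∘ (⇑τ1 ∘ (h ∘ (⇑τ1 ∘ (⇑τ2 ∘ ⇑τ3)))))) ∈ S :=
      hcomp _ (swS _ _) _ (hcomp _ (swS _ _) _ (hcomp _ (swS _ _) _
        (hcomp _ hh _ (hcomp _ (swS _ _) _ (hcomp _ (swS _ _) _ (swS _ _))))))
    have heq : ⇑((τ1.trans τ2).trans τ3) ∘ h ∘ ⇑((τ1.trans τ2).trans τ3).symm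
        = (⇑τ3 ∘ (⇑τ2 ∘ (⇑τ1 ∘ (h ∘ (⇑τ1 ∘ (⇑τ2 ∘ ⇑τ3)))))) := by
      funext x
      simp [hτ1, hτ2, hτ3, Equiv.trans_apply, Equiv.symm_trans_apply,
        Equiv.symm_swap, Function.comp]
    rw [heq]
    exact hmem

theorem stmt6 {A : Type*} [DecidableEq A] (S : Set (A → A))
    (hne : S.Nonempty)
    (hcomp : ∀ f ∈ S, ∀ g ∈ S, f ∘ g ∈ S)
    (hFT : ∀ a b : A, a ≠ b → ⇑(Equiv.swap a b) ∈ S)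
    (hcard : ∃ x y z : A, x ≠ y ∧ x ≠ z ∧ y ≠ z)
    (hsc : ∃ h ∈ S, ∃ c, SemiConstWith h c)
    (hnoconst : ∀ h ∈ S, ¬ ∃ c, ∀ x, h x = c)
    (f : A → A) (hf : f ∈ S) (b : A) (hb : f (f b) ≠ f b) :
    ∀ a : A, f a = f b →
      ∃ g ∈ S, (∃ c, SemiConstWith g c) ∧
        (∀ x, g x = g a → x = a) ∧
        (∀ c, SemiConstWith g c → f c ≠ f b) ∧
        ∃ x, f (g (f x)) = f (g (f b)) ∧ f (f x) ≠ f (f b) := by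
  intro a ha
  -- swaps (including degenerate ones) are in S
  have swS : ∀ x y : A, ⇑(Equiv.swap x y) ∈ S := by
    intro x y
    by_cases hxy : x = y
    · subst hxy
      obtain ⟨p, q, r, hpq, -, -⟩ := hcard
      have hmem := hcomp _ (hFT p q hpq) _ (hFT p q hpq)
      have : ⇑(Equiv.swap p q) ∘ ⇑(Equiv.swap p q) = ⇑(Equiv.swap x x) := by
        funext z; simp [Equiv.swap_apply_self]
      rwa [this] at hmem
    · exact hFT x y hxy
  -- the semi-constant function h, normalized so that c₀ ∈ B₁
  obtain ⟨h, hhS, c₀, B₀, hB₀nt, hB₀c, hB₀id⟩ := hsc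
  set B₁ : Set A := insert c₀ B₀ with hB₁
  have hc₀B₁ : c₀ ∈ B₁ := Set.mem_insert _ _
  have hB₁c : ∀ x ∈ B₁, h x = c₀ := by
    intro x hx
    rcases hx with rfl | hx
    · by_cases hc : x ∈ B₀
      · exact hB₀c x hc
      · exact hB₀id x hc
    · exact hB₀c x hx
  have hB₁id : ∀ x ∉ B₁, h x = x := fun x hx =>
    hB₀id x (fun h' => hx (Set.mem_insert_iff.mpr (Or.inr h')))
  have hB₁nt : B₁.Nontrivial := hB₀nt.mono (Set.subset_insert _ _)
  -- a point outside B₁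
  have hW : ∃ w, w ∉ B₁ := by
    by_contra hc
    push_neg at hc
    exact hnoconst h hhS ⟨c₀, fun x => hB₁c x (hc x)⟩
  obtain ⟨w, hw⟩ := hW
  -- a point of B₁ other than c₀
  have hd : ∃ d ∈ B₁, d ≠ c₀ := by
    obtain ⟨p, hp, q, hq, hpq⟩ := hB₁nt
    by_cases hpc : p = c₀
    · exact ⟨q, hq, fun e => hpq (hpc.trans e.symm)⟩
    · exact ⟨p, hp, hpc⟩
  obtain ⟨d₀, hd₀B, hd₀c⟩ := hd
  have hc₀w : c₀ ≠ w := fun e => hw (e ▸ hc₀B₁)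
  have hd₀w : d₀ ≠ w := fun e => hw (e ▸ hd₀B)
  have hafb : a ≠ f b := by
    intro e
    rw [e] at ha
    exact hb ha
  by_cases hgood : ∃ x₀, f (f x₀) ≠ f (f b) ∧ f x₀ ≠ a
  · obtain ⟨x₀, hx1, hx2⟩ := hgood
    have hfbfx : f b ≠ f x₀ := by
      intro e
      exact hx1 (by rw [← e])
    obtain ⟨π, hπ1, hπ2, hπ3, hπmem⟩ :=
      perm3_mem S hcomp swS c₀ d₀ w (f b) (f x₀) a hd₀c.symm hc₀w hd₀w
        hfbfx hafb.symm hx2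
    set g : A → A := ⇑π ∘ h ∘ ⇑π.symm with hg
    have hgmem : g ∈ S := hπmem h hhS
    have hgin : ∀ x ∈ π '' B₁, g x = f b := by
      rintro x ⟨y, hy, rfl⟩
      show π (h (π.symm (π y))) = f b
      rw [Equiv.symm_apply_apply, hB₁c y hy, hπ1]
    have hgout : ∀ x ∉ π '' B₁, g x = x := by
      intro x hx
      have hsx : π.symm x ∉ B₁ := fun hy => hx ⟨π.symm x, hy, π.apply_symm_apply x⟩
      show π (h (π.symm x)) = x
      rw [hB₁id _ hsx, π.apply_symm_apply]
    have memfb : f b ∈ π '' B₁ := ⟨c₀, hc₀B₁, hπ1⟩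
    have memfx : f x₀ ∈ π '' B₁ := ⟨d₀, hd₀B, hπ2⟩
    have haout : a ∉ π '' B₁ := by
      rintro ⟨y, hy, hya⟩
      rw [← hπ3] at hya
      exact hw (π.injective hya ▸ hy)
    have hga : g a = a := hgout a haout
    have hnt : (π '' B₁).Nontrivial := ⟨f b, memfb, f x₀, memfx, hfbfx⟩
    refine ⟨g, hgmem, ⟨f b, π '' B₁, hnt, hgin, hgout⟩, ?_, ?_, x₀, ?_, hx1⟩
    · intro x hx
      rw [hga] at hx
      by_cases hxB : x ∈ π '' B₁
      · exact absurd (hgin x hxB ▸ hx) hafb.symm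
      · rw [hgout x hxB] at hx
        exact hx
    · rintro c' ⟨B', hnt', hc', hid'⟩
      have hxB' : f x₀ ∈ B' := by
        by_contra hcon
        have := hid' _ hcon
        rw [hgin _ memfx] at this
        exact hfbfx this
      have : c' = f b := by rw [← hc' _ hxB', hgin _ memfx]
      rw [this]
      exact hb
    · rw [hgin _ memfx, hgin _ memfb]
  · exfalso
    push_neg at hgood
    -- a point distinct from f b and f (f b)
    have hz : ∃ z, z ≠ f b ∧ z ≠ f (f b) := by
      by_contra hc
      push_neg at hc
      obtain ⟨x, y, z, hxy, hxz, hyz⟩ := hcard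
      have key : ∀ t : A, t = f b ∨ t = f (f b) := fun t => by
        by_cases ht : t = f b
        · exact Or.inl ht
        · exact Or.inr (hc t ht)
      rcases key x with h1 | h1 <;> rcases key y with h2 | h2 <;>
        rcases key z with h3 | h3 <;> simp_all
    obtain ⟨z, hz1, hz2⟩ := hz
    obtain ⟨π, hπ1, hπ2, hπ3, hπmem⟩ :=
      perm3_mem S hcomp swS c₀ d₀ w (f b) (f (f b)) z hd₀c.symm hc₀w hd₀w
        hb.symm hz1.symm hz2.symm
    set k : A → A := ⇑π ∘ h ∘ ⇑π.symm with hk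
    have hkmem : k ∈ S := hπmem h hhS
    have hkin : ∀ y ∈ B₁, k (π y) = f b := by
      intro y hy
      show π (h (π.symm (π y))) = f b
      rw [Equiv.symm_apply_apply, hB₁c y hy, hπ1]
    have hconst : ∀ x, (k ∘ (f ∘ f)) x = f b := by
      intro x
      show k (f (f x)) = f b
      by_cases hx : f (f x) = f (f b)
      · rw [hx, ← hπ2]
        exact hkin d₀ hd₀B
      · have hxa : f x = a := hgood x hx
        have hkc := hkin c₀ hc₀B₁
        rw [hπ1] at hkc
        rw [hxa, ha]
        exact hkc
    exact hnoconst _ (hcomp _ hkmem _ (hcomp _ hf _ hf)) ⟨f b, hconst⟩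
end

section
/- Let S ⊆ A^A be a fully-transpositional function semigroup. If S contains a function f such that f[A \ Idp(f)] is finite and f is not injective, then S contains a semi-constant function, where Idp(f) = {a ∈ A : f⁻¹[{a}] = {a}}. -/
private lemma collapse_ind {A : Type*} [DecidableEq A] (S : Set (A → A))
    (hcomp : ∀ f ∈ S, ∀ g ∈ S, f ∘ g ∈ S)
    (hFT : ∀ a b : A, a ≠ b → ⇑(Equiv.swap a b) ∈ S) :
    ∀ (m : ℕ) (h : A → A), h ∈ S →
      (∀ x, h x ≠ x → h (h x) = h x) →
      ∀ V : Set A, V.Finite → V.ncard ≤ m →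
      (∀ x, h x ≠ x → h x ∈ V) →
      (∃ x, h x ≠ x) →
      ∃ g ∈ S, ∃ c, SemiConstWith g c := by
  intro m
  induction m with
  | zero =>
    intro h hS hidem V hVfin hcard hval hmov
    obtain ⟨b, hb⟩ := hmov
    have hVe : V = ∅ := (Set.ncard_eq_zero hVfin).mp (Nat.le_zero.mp hcard)
    have := hval b hb
    rw [hVe] at this
    exact absurd this (Set.notMem_empty _)
  | succ m ih =>
    intro h hS hidem V hVfin hcard hval hmov
    obtain ⟨b1, hb1⟩ := hmov
    set v1 := h b1 with hv1
    have hv1V : v1 ∈ V := hval b1 hb1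
    have hv1fix : h v1 = v1 := hidem b1 hb1
    by_cases hone : ∀ x, h x ≠ x → h x = v1
    · refine ⟨h, hS, v1, {x | h x ≠ x} ∪ {v1}, ⟨b1, Or.inl hb1, v1, Or.inr rfl, Ne.symm hb1⟩,
        ?_, ?_⟩
      · rintro x (hx | hx)
        · exact hone x hx
        · rw [hx]; exact hv1fix
      · intro x hx
        by_contra hxx
        exact hx (Or.inl hxx)
    · push_neg at hone
      obtain ⟨x2, hx2m, hx2v⟩ := hone
      set v2 := h x2 with hv2
      have hv2V : v2 ∈ V := hval x2 hx2m
      have hv2fix : h v2 = v2 := hidem x2 hx2m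
      have hne12 : v2 ≠ v1 := hx2v
      have hb1v2 : v2 ≠ b1 := fun e => hb1 (by rw [hv1, ← e]; exact hv2fix)
      set σ := Equiv.swap v2 b1 with hσdef
      have hσS : ⇑σ ∈ S := hFT v2 b1 hb1v2
      set g := h ∘ (⇑σ ∘ h) with hgdef
      have hgS : g ∈ S := hcomp h hS _ (hcomp _ hσS h hS)
      have hgapp : ∀ x, g x = h (σ (h x)) := fun x => rfl
      have key : ∀ x, g x = x ∨ (g x ∈ V ∧ g x ≠ v2 ∧ h (g x) = g x) := by
        intro x
        by_cases hx : h x = x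
        · by_cases hxv2 : x = v2
          · right
            have hgx : g x = v1 := by
              rw [hgapp, hx, hxv2, Equiv.swap_apply_left]
            rw [hgx]
            exact ⟨hv1V, Ne.symm hne12, hv1fix⟩
          · have hxb1 : x ≠ b1 := fun e => hb1 (by rw [hv1, ← e]; exact hx)
            left
            rw [hgapp, hx, Equiv.swap_apply_of_ne_of_ne hxv2 hxb1, hx]
        · have hyV : h x ∈ V := hval x hx
          have hyfix : h (h x) = h x := hidem x hx
          by_cases hyv2 : h x = v2
          · right
            have hgx : g x = v1 := by
              rw [hgapp, hyv2, Equiv.swap_apply_left]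
            rw [hgx]
            exact ⟨hv1V, Ne.symm hne12, hv1fix⟩
          · have hyb1 : h x ≠ b1 := fun e => hb1 (by rw [hv1, ← e]; exact hyfix)
            right
            have hgx : g x = h x := by
              rw [hgapp, Equiv.swap_apply_of_ne_of_ne hyv2 hyb1, hyfix]
            rw [hgx]
            exact ⟨hyV, hyv2, hyfix⟩
      have hgidem : ∀ x, g x ≠ x → g (g x) = g x := by
        intro x hgx
        rcases key x with hk | ⟨_, hkv2, hkfix⟩
        · exact absurd hk hgx
        · have hkb1 : g x ≠ b1 := fun e => hb1 (by rw [hv1, ← e]; exact hkfix)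
          rw [hgapp (g x), hkfix, Equiv.swap_apply_of_ne_of_ne hkv2 hkb1, hkfix]
      have hgval : ∀ x, g x ≠ x → g x ∈ V \ {v2} := by
        intro x hgx
        rcases key x with hk | ⟨hkV, hkv2, _⟩
        · exact absurd hk hgx
        · exact ⟨hkV, hkv2⟩
      have hgmov : ∃ x, g x ≠ x := by
        refine ⟨v2, ?_⟩
        have : g v2 = v1 := by
          rw [hgapp, hv2fix, Equiv.swap_apply_left, ← hv1]
        rw [this]
        exact Ne.symm hne12
      refine ih g hgS hgidem (V \ {v2}) (hVfin.subset Set.diff_subset) ?_ hgval hgmov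
      have := Set.ncard_diff_singleton_of_mem hv2V
      have hpos : 0 < V.ncard := (Set.ncard_pos hVfin).mpr ⟨v2, hv2V⟩
      omega

theorem stmt7 {A : Type*} [DecidableEq A] (S : Set (A → A))
    (hne : S.Nonempty)
    (hcomp : ∀ f ∈ S, ∀ g ∈ S, f ∘ g ∈ S)
    (hFT : ∀ a b : A, a ≠ b → ⇑(Equiv.swap a b) ∈ S)
    (f : A → A) (hf : f ∈ S)
    (hfin : (f '' {a : A | f ⁻¹' {a} ≠ {a}}).Finite)
    (hinj : ¬ Function.Injective f) :
    ∃ g ∈ S, ∃ c, SemiConstWith g c := by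
  set F := f '' {a : A | f ⁻¹' {a} ≠ {a}} with hFdef
  -- every moved point has its value in F
  have hF : ∀ a, f a ≠ a → f a ∈ F := by
    intro a ha
    refine ⟨a, ?_, rfl⟩
    intro hpre
    apply ha
    have : a ∈ f ⁻¹' {a} := by rw [hpre]; exact rfl
    simpa using this
  -- F is invariant under iterates of f
  have hiter : ∀ (k : ℕ) (x : A), x ∈ F → f^[k] x ∈ F := by
    intro k
    induction k with
    | zero => intro x hx; simpa using hx
    | succ k ihk =>
      intro x hx
      rw [Function.iterate_succ_apply']
      by_cases hfy : f (f^[k] x) = f^[k] x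
      · rw [hfy]; exact ihk x hx
      · exact hF _ hfy
  -- pigeonhole: two iterates agree on F
  haveI := hfin.fintype
  obtain ⟨i0, j0, hij0, heq0⟩ :=
    Finite.exists_ne_map_eq_of_infinite
      (fun k : ℕ => (fun y : F => (⟨f^[k] y, hiter k y y.2⟩ : F)))
  have hmain : ∃ i j : ℕ, i < j ∧ ∀ y ∈ F, f^[i] y = f^[j] y := by
    rcases lt_or_gt_of_ne hij0 with hlt | hgt
    · exact ⟨i0, j0, hlt, fun y hy => by
        have := congrFun heq0 ⟨y, hy⟩
        exact Subtype.ext_iff.mp this⟩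
    · exact ⟨j0, i0, hgt, fun y hy => by
        have := congrFun heq0 ⟨y, hy⟩
        exact (Subtype.ext_iff.mp this).symm⟩
  obtain ⟨i, j, hij, heq⟩ := hmain
  set p := j - i with hpdef
  have hp : 0 < p := by omega
  have hstep : ∀ k, i ≤ k → ∀ y ∈ F, f^[k + p] y = f^[k] y := by
    intro k hk y hy
    have h1 : k + p = (k - i) + j := by omega
    have h2 : k = (k - i) + i := by omega
    rw [h1, Function.iterate_add_apply, ← heq y hy]
    conv_rhs => rw [h2, Function.iterate_add_apply]
  have hmult : ∀ (m k : ℕ), i ≤ k → ∀ y ∈ F, f^[k + m * p] y = f^[k] y := by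
    intro m
    induction m with
    | zero => intro k hk y hy; simp
    | succ m ihm =>
      intro k hk y hy
      have h1 : k + (m + 1) * p = (k + m * p) + p := by ring
      rw [h1, hstep (k + m * p) (by omega) y hy, ihm k hk y hy]
  set n := (i + 1) * p with hndef
  have hn1 : 1 ≤ n := by
    have : 1 * 1 ≤ (i + 1) * p := Nat.mul_le_mul (by omega) hp
    omega
  have hni : i ≤ n - 1 := by
    have : (i + 1) * 1 ≤ (i + 1) * p := Nat.mul_le_mul_left _ hp
    omega
  have hkey : ∀ y ∈ F, f^[2 * n - 1] y = f^[n - 1] y := by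
    intro y hy
    have h1 : 2 * n - 1 = (n - 1) + (i + 1) * p := by omega
    rw [h1, hmult (i + 1) (n - 1) hni y hy]
  set h := f^[n] with hhdef
  -- h ∈ S
  have hpowS : ∀ k : ℕ, f^[k + 1] ∈ S := by
    intro k
    induction k with
    | zero => simpa [Function.iterate_one] using hf
    | succ k ihk =>
      have : f^[k + 1 + 1] = f ∘ f^[k + 1] := Function.iterate_succ' f (k + 1)
      rw [this]
      exact hcomp f hf _ ihk
  have hhS : h ∈ S := by
    have : n = (n - 1) + 1 := by omega
    rw [hhdef, this]
    exact hpowS (n - 1)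
  -- moved points of h: values in F and idempotent
  have hmoved_aux : ∀ x, h x ≠ x → f x ≠ x := by
    intro x hx hfx
    exact hx (Function.iterate_fixed hfx n)
  have he1 : ∀ x, h x = f^[n - 1] (f x) := by
    intro x
    calc h x = f^[(n - 1) + 1] x := by rw [show n - 1 + 1 = n from by omega]
      _ = f^[n - 1] (f x) := Function.iterate_succ_apply f (n - 1) x
  have hval : ∀ x, h x ≠ x → h x ∈ F := by
    intro x hx
    rw [he1 x]
    exact hiter (n - 1) (f x) (hF x (hmoved_aux x hx))
  have hidem : ∀ x, h x ≠ x → h (h x) = h x := by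
    intro x hx
    have hy : f x ∈ F := hF x (hmoved_aux x hx)
    have e2 : h (h x) = f^[2 * n - 1] (f x) := by
      calc h (h x) = f^[n + n] x := (Function.iterate_add_apply f n n x).symm
        _ = f^[(2 * n - 1) + 1] x := by rw [show 2 * n - 1 + 1 = n + n from by omega]
        _ = f^[2 * n - 1] (f x) := Function.iterate_succ_apply f (2 * n - 1) x
    rw [e2, hkey (f x) hy, ← he1 x]
  have hmov : ∃ x, h x ≠ x := by
    by_contra hc
    push_neg at hc
    obtain ⟨u, v, huv, hne'⟩ := Function.not_injective_iff.mp hinj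
    apply hne'
    have : h u = h v := by
      rw [he1 u, he1 v, huv]
    rw [hc u, hc v] at this
    exact this
  exact collapse_ind S hcomp hFT F.ncard h hhS hidem F hfin le_rfl hval hmov
end

section
/- Let f : A → A, let (b, a, c) be an f-long triple (f(b) = a, f(a) = c, b ≠ a, a ≠ c) and let (r, q, s, t) be an f-long-wide quadruple (f(q) = f(s) = t with q, s, t pairwise distinct, and f(r) = s) with t ≠ a and t ≠ c. Then there exists a transposition π = ⟨x y⟩ with x, y ∉ [b]_f such that [b]_{f∘π∘f} ≠ [b]_{f²}. -/
theorem stmt8 {A : Type*} [DecidableEq A] (f : A → A) (b a c r q s t : A)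
    (h1 : f b = a) (h2 : f a = c) (h3 : b ≠ a) (h4 : a ≠ c)
    (h5 : f q = t) (h6 : f s = t) (h7 : q ≠ s) (h8 : q ≠ t) (h9 : s ≠ t)
    (h10 : f r = s) (h11 : t ≠ a) (h12 : t ≠ c) :
    ∃ x y : A, x ≠ y ∧ f x ≠ f b ∧ f y ≠ f b ∧
      {z : A | f (Equiv.swap x y (f z)) = f (Equiv.swap x y (f b))} ≠
        {z : A | f (f z) = f (f b)} := by
  have haq : a ≠ q := fun h => h12 (by rw [← h5, ← h, h2])
  have hsa : s ≠ a := fun h => h12 (by rw [← h6, h, h2])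
  refine ⟨a, q, haq, ?_, ?_, ?_⟩
  · rw [h1, h2]; exact fun h => h4 h.symm
  · rw [h1, h5]; exact h11
  · intro hset
    have hr : r ∈ {z : A | f (Equiv.swap a q (f z)) = f (Equiv.swap a q (f b))} := by
      simp only [Set.mem_setOf_eq, h1, h10, Equiv.swap_apply_left,
        Equiv.swap_apply_of_ne_of_ne hsa (fun h => h7 h.symm), h6, h5]
    rw [hset] at hr
    simp only [Set.mem_setOf_eq, h1, h2, h10, h6] at hr
    exact h12 hr
end

section
/- Let S be a fully-transpositional semigroup on A containing no semi-constant function, and let f ∈ S with |B(f)| ≤ 2, where B(f) is the set of ~_f-classes of size ≥ 2. Then either f is a bijection of A moving only finitely many points (in which case f and f⁻¹ are in S), or the set A \ (Mo-pre(f) ∪ Idp(f)) is infinite, where Mo-pre(f) = ∪B(f) and Idp(f) = {a : f⁻¹[{a}] = {a}}. -/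
private lemma swap_mem_of_mem {A : Type*} [DecidableEq A] {W : Set A} {a b : A}
    (ha : a ∈ W) (hb : b ∈ W) {z : A} (hz : z ∈ W) : Equiv.swap a b z ∈ W := by
  rcases eq_or_ne z a with rfl | h1
  · simpa [Equiv.swap_apply_left] using hb
  rcases eq_or_ne z b with rfl | h2
  · simpa [Equiv.swap_apply_right] using ha
  rwa [Equiv.swap_apply_of_ne_of_ne h1 h2]

private lemma collapse {A : Type*} [DecidableEq A] (S : Set (A → A))
    (hcomp : ∀ f ∈ S, ∀ g ∈ S, f ∘ g ∈ S)
    (hFT : ∀ a b : A, a ≠ b → ⇑(Equiv.swap a b) ∈ S)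
    (hnsc : ∀ g ∈ S, ¬ ∃ c, SemiConstWith g c)
    (f : A → A) (hf : f ∈ S) (W : Set A)
    (hfid : ∀ x ∉ W, f x = x) (hfW : f '' W ⊆ W)
    (a b : A) (haW : a ∈ W) (hbW : b ∈ W) (hab : a ≠ b) (hfab : f a = f b) :
    ∀ n (g : A → A), g ∈ S → (∀ x ∉ W, g x = x) → g '' W ⊆ W → (g '' W).Finite →
      (g '' W).ncard ≤ n → False := by
  intro n
  induction n with
  | zero =>
    intro g hg hgid hgW hfin hcard
    have hne : (g '' W).Nonempty := ⟨g a, ⟨a, haW, rfl⟩⟩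
    have := (Set.ncard_pos hfin).2 hne
    omega
  | succ n ih =>
    intro g hg hgid hgW hfin hcard
    by_cases h1 : (g '' W).ncard ≤ 1
    · -- g is constant on W : semi-constant, contradiction
      have hsub : ∀ p ∈ g '' W, ∀ q ∈ g '' W, p = q := fun p hp q hq =>
        (Set.ncard_le_one_iff hfin).1 h1 hp hq
      have hconst : ∀ x ∈ W, g x = g a := fun x hx =>
        hsub _ ⟨x, hx, rfl⟩ _ ⟨a, haW, rfl⟩
      exact hnsc g hg ⟨g a, W, ⟨a, haW, b, hbW, hab⟩, hconst, hgid⟩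
    · push_neg at h1
      obtain ⟨x, y, hx, hy, hxy⟩ := (Set.one_lt_ncard_iff hfin).1 h1
      have hxW : x ∈ W := hgW hx
      have hyW : y ∈ W := hgW hy
      set s1 := Equiv.swap x a with hs1
      set y' := s1 y with hy'
      set s2 := Equiv.swap y' b with hs2
      have hy'a : y' ≠ a := by
        intro h
        have : s1 y = s1 x := by
          rw [← hy', h]; exact (Equiv.swap_apply_left x a).symm
        exact hxy (s1.injective this).symm
      have hy'W : y' ∈ W := swap_mem_of_mem hxW haW hyW
      -- the composed permutation π = s2 ∘ s1
      have hπx : s2 (s1 x) = a := by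
        rw [hs1, Equiv.swap_apply_left, hs2, Equiv.swap_apply_of_ne_of_ne hy'a.symm hab]
      have hπy : s2 (s1 y) = b := by rw [← hy', hs2, Equiv.swap_apply_left]
      -- membership in S of g' = f ∘ s2 ∘ s1 ∘ g
      have hstep1 : (⇑s1 ∘ g) ∈ S := by
        rcases eq_or_ne x a with rfl | hxa
        · have : ⇑s1 ∘ g = g := by
            funext z; simp [hs1, Equiv.swap_self]
          rwa [this]
        · exact hcomp _ (hFT x a hxa) g hg
      have hstep2 : (⇑s2 ∘ (⇑s1 ∘ g)) ∈ S := by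
        rcases eq_or_ne y' b with rfl | hy'b
        · have : ⇑s2 ∘ (⇑s1 ∘ g) = ⇑s1 ∘ g := by
            funext z; simp [hs2, Equiv.swap_self]
          rwa [this]
        · exact hcomp _ (hFT y' b hy'b) _ hstep1
      set g' : A → A := f ∘ (⇑s2 ∘ (⇑s1 ∘ g)) with hg'def
      have hg' : g' ∈ S := hcomp f hf _ hstep2
      -- g' is the identity off W
      have hg'id : ∀ z ∉ W, g' z = z := by
        intro z hz
        have h1z : s1 z = z := Equiv.swap_apply_of_ne_of_ne
          (fun h => hz (h ▸ hxW)) (fun h => hz (h ▸ haW))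
        have h2z : s2 z = z := Equiv.swap_apply_of_ne_of_ne
          (fun h => hz (h ▸ hy'W)) (fun h => hz (h ▸ hbW))
        simp only [hg'def, Function.comp_apply, hgid z hz, h1z, h2z]
        exact hfid z hz
      -- g' '' W ⊆ W
      have hg'W : g' '' W ⊆ W := by
        rintro _ ⟨w, hw, rfl⟩
        have h1 : s1 (g w) ∈ W := swap_mem_of_mem hxW haW (hgW ⟨w, hw, rfl⟩)
        have h2 : s2 (s1 (g w)) ∈ W := swap_mem_of_mem hy'W hbW h1
        exact hfW ⟨_, h2, rfl⟩
      -- cardinality decreases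
      have hsub2 : g' '' W ⊆ (fun z => f (s2 (s1 z))) '' (g '' W \ {y}) := by
        rintro _ ⟨w, hw, rfl⟩
        rcases eq_or_ne (g w) y with hgy | hgy
        · refine ⟨x, ⟨hx, hxy⟩, ?_⟩
          simp only [hg'def, Function.comp_apply, hgy, hπx, hπy, hfab]
        · exact ⟨g w, ⟨⟨w, hw, rfl⟩, hgy⟩, rfl⟩
      have hfin0 : (g '' W \ {y}).Finite := hfin.diff
      have hfin2 : ((fun z => f (s2 (s1 z))) '' (g '' W \ {y})).Finite := hfin0.image _
      have hfin' : (g' '' W).Finite := hfin2.subset hsub2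
      have c1 : (g' '' W).ncard ≤ ((fun z => f (s2 (s1 z))) '' (g '' W \ {y})).ncard :=
        Set.ncard_le_ncard hsub2 hfin2
      have c2 : ((fun z => f (s2 (s1 z))) '' (g '' W \ {y})).ncard ≤ (g '' W \ {y}).ncard :=
        Set.ncard_image_le hfin0
      have c3 : (g '' W \ {y}).ncard < (g '' W).ncard :=
        Set.ncard_diff_singleton_lt_of_mem hy hfin
      exact ih g' hg' hg'id hg'W hfin' (by omega)

theorem stmt10 {A : Type*} [DecidableEq A] (S : Set (A → A))
    (hne : S.Nonempty)
    (hcomp : ∀ f ∈ S, ∀ g ∈ S, f ∘ g ∈ S)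
    (hFT : ∀ a b : A, a ≠ b → ⇑(Equiv.swap a b) ∈ S)
    (hnsc : ∀ g ∈ S, ¬ ∃ c, SemiConstWith g c)
    (f : A → A) (hf : f ∈ S)
    -- `|B(f)| ≤ 2`: among any three nontrivial `~_f`-classes, two coincide
    (hB : ∀ a b c : A, {x | f x = f a}.Nontrivial → {x | f x = f b}.Nontrivial →
      {x | f x = f c}.Nontrivial →
      {x | f x = f a} = {x | f x = f b} ∨ {x | f x = f a} = {x | f x = f c} ∨
        {x | f x = f b} = {x | f x = f c}) :
    (Function.Bijective f ∧ {x : A | f x ≠ x}.Finite ∧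
      ∃ g ∈ S, Function.LeftInverse g f ∧ Function.RightInverse g f) ∨
    {a : A | ¬ ({x : A | f x = f a}.Nontrivial) ∧ f ⁻¹' {a} ≠ {a}}.Infinite := by
  set T : Set A := {a : A | ¬ ({x : A | f x = f a}.Nontrivial) ∧ f ⁻¹' {a} ≠ {a}} with hTdef
  by_cases hTinf : T.Infinite
  · exact Or.inr hTinf
  have hT : T.Finite := Set.not_infinite.mp hTinf
  left
  set W : Set A := {x : A | f ⁻¹' {x} ≠ {x}} with hWdef
  -- f is the identity off W
  have hfid : ∀ x ∉ W, f x = x := by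
    intro x hx
    have hx' : f ⁻¹' {x} = {x} := not_not.mp hx
    have hm : x ∈ f ⁻¹' {x} := by rw [hx']; exact rfl
    exact hm
  -- f '' W ⊆ W
  have hfW : f '' W ⊆ W := by
    rintro _ ⟨z, hz, rfl⟩
    intro hfz
    have hzmem : z ∈ f ⁻¹' {f z} := rfl
    have hzeq : z = f z := by rwa [hfz, Set.mem_singleton_iff] at hzmem
    rw [← hzeq] at hfz
    exact hz hfz
  -- the set of images of nontrivial classes has at most two elements
  set Mo : Set A := {x : A | ({x' | f x' = f x}).Nontrivial} with hMo
  have hMfin : (f '' Mo).Finite := by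
    have h3 : ∀ p ∈ f '' Mo, ∀ q ∈ f '' Mo, ∀ r ∈ f '' Mo, p = q ∨ p = r ∨ q = r := by
      rintro _ ⟨p, hp, rfl⟩ _ ⟨q, hq, rfl⟩ _ ⟨r, hr, rfl⟩
      rcases hB p q r hp hq hr with h | h | h
      · exact Or.inl (h.subset (show f p = f p from rfl))
      · exact Or.inr (Or.inl (h.subset (show f p = f p from rfl)))
      · exact Or.inr (Or.inr (h.subset (show f q = f q from rfl)))
    by_cases hex : ∃ p ∈ f '' Mo, ∃ q ∈ f '' Mo, p ≠ q
    · obtain ⟨p, hp, q, hq, hpq⟩ := hex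
      have hsub : f '' Mo ⊆ {p, q} := by
        intro r hr
        rcases h3 p hp q hq r hr with h | h | h
        · exact absurd h hpq
        · exact Or.inl h.symm
        · exact Or.inr h.symm
      exact ((Set.finite_singleton q).insert p).subset hsub
    · push_neg at hex
      exact Set.Subsingleton.finite fun p hp q hq => hex p hp q hq
  -- f '' W is finite
  have hWsub : W ⊆ T ∪ Mo := by
    intro w hw
    by_cases hc : ({x' | f x' = f w}).Nontrivial
    · exact Or.inr hc
    · exact Or.inl ⟨hc, hw⟩
  have hfinW : (f '' W).Finite := by
    refine ((hT.image f).union hMfin).subset ?_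
    rintro _ ⟨w, hw, rfl⟩
    rcases hWsub hw with h | h
    · exact Or.inl ⟨w, h, rfl⟩
    · exact Or.inr ⟨w, h, rfl⟩
  -- f is injective
  have hInj : Function.Injective f := by
    by_contra hni
    obtain ⟨a, b, hfab, hab⟩ := Function.not_injective_iff.mp hni
    have hclass : ({x | f x = f a}).Nontrivial := ⟨a, rfl, b, hfab.symm, hab⟩
    have hmemW : ∀ z : A, ({x | f x = f z}).Nontrivial → z ∈ W := by
      intro z hz hfz
      obtain ⟨p, hp, q, hq, hpq⟩ := hz
      have hfzz : f z = z := by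
        have : z ∈ f ⁻¹' {z} := by rw [hfz]; exact rfl
        exact this
      have hpz : p = z := by
        have : p ∈ f ⁻¹' {z} := by
          show f p ∈ ({z} : Set A); rw [hp, hfzz]; rfl
        rwa [hfz, Set.mem_singleton_iff] at this
      have hqz : q = z := by
        have : q ∈ f ⁻¹' {z} := by
          show f q ∈ ({z} : Set A); rw [hq, hfzz]; rfl
        rwa [hfz, Set.mem_singleton_iff] at this
      exact hpq (hpz.trans hqz.symm)
    have haW : a ∈ W := hmemW a hclass
    have hbW : b ∈ W := hmemW b (by rwa [show {x | f x = f b} = {x | f x = f a} from by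
      ext x; simp [hfab]])
    exact collapse S hcomp hFT hnsc f hf W hfid hfW a b haW hbW hab hfab
      (f '' W).ncard f hf hfid hfW hfinW le_rfl
  -- all classes are trivial, so W ⊆ T is finite
  have hMoEmpty : ∀ z : A, ¬ ({x | f x = f z}).Nontrivial := by
    intro z hz
    obtain ⟨p, hp, q, hq, hpq⟩ := hz
    exact hpq (hInj (hp.trans hq.symm))
  have hWT : W ⊆ T := fun w hw => ⟨hMoEmpty w, hw⟩
  have hWfin : W.Finite := hT.subset hWT
  -- f '' W = W
  have himg : f '' W = W := by
    refine Set.eq_of_subset_of_ncard_le hfW ?_ hWfin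
    rw [Set.ncard_image_of_injective W hInj]
  -- f is surjective
  have hSurj : Function.Surjective f := by
    intro y
    by_cases hy : y ∈ W
    · rw [← himg] at hy; obtain ⟨x, _, hx⟩ := hy; exact ⟨x, hx⟩
    · exact ⟨y, hfid y hy⟩
  have hmoved : {x : A | f x ≠ x}.Finite :=
    hWfin.subset fun x hx => by
      by_contra hxW; exact hx (hfid x hxW)
  -- iterates of f stay in S
  have hitS : ∀ k : ℕ, f^[k + 1] ∈ S := by
    intro k
    induction k with
    | zero => simpa using hf
    | succ k ihk =>
      rw [Function.iterate_succ' f (k + 1)]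
      exact hcomp f hf _ ihk
  -- iterates map W to W
  have hiterW : ∀ (k : ℕ) (x : A), x ∈ W → f^[k] x ∈ W := by
    intro k
    induction k with
    | zero => intro x hx; simpa using hx
    | succ k ihk =>
      intro x hx
      rw [Function.iterate_succ_apply' f k x]
      exact hfW ⟨_, ihk x hx, rfl⟩
  -- pigeonhole: two iterates agree
  haveI : Fintype ↥hWfin.toFinset := FinsetCoe.fintype _
  obtain ⟨m, n, hmn, heq⟩ := Finite.exists_ne_map_eq_of_infinite
    (fun (k : ℕ) => (fun (t : ↥hWfin.toFinset) =>
      (⟨f^[k] t, (Set.Finite.mem_toFinset hWfin).2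
        (hiterW k t ((Set.Finite.mem_toFinset hWfin).1 t.2))⟩ : ↥hWfin.toFinset)))
  have hiterEq : ∀ i j : ℕ, i < j → (∀ x ∈ W, f^[i] x = f^[j] x) → False → True := fun _ _ _ _ _ => trivial
  obtain ⟨i, j, hij, he⟩ : ∃ i j : ℕ, i < j ∧ ∀ x ∈ W, f^[i] x = f^[j] x := by
    have key : ∀ x ∈ W, f^[m] x = f^[n] x := by
      intro x hx
      have := congrFun heq ⟨x, (Set.Finite.mem_toFinset hWfin).2 hx⟩
      exact congrArg Subtype.val this
    rcases lt_or_gt_of_ne hmn with h | h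
    · exact ⟨m, n, h, key⟩
    · exact ⟨n, m, h, fun x hx => (key x hx).symm⟩
  have hext : f^[i] = f^[j] := by
    funext x
    by_cases hx : x ∈ W
    · exact he x hx
    · rw [Function.iterate_fixed (hfid x hx), Function.iterate_fixed (hfid x hx)]
  have hcancel : f^[j - i] = id := by
    have h1 : f^[i] ∘ f^[j - i] = f^[i] := by
      rw [← Function.iterate_add f i (j - i)]
      rw [show i + (j - i) = j from by omega, ← hext]
    funext x
    have := congrFun h1 x
    exact hInj.iterate i this
  set d := j - i with hd
  have hd1 : 1 ≤ d := by omega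
  have hDid : ∀ x : A, f^[d + d] x = x := by
    intro x
    rw [Function.iterate_add_apply, hcancel]
    simp [hcancel]
  have h2d : d + d - 1 + 1 = d + d := by omega
  refine ⟨⟨hInj, hSurj⟩, hmoved, f^[d + d - 1], ?_, ?_, ?_⟩
  · have : d + d - 1 = (d + d - 2) + 1 := by omega
    rw [this]; exact hitS _
  · intro x
    have := hDid x
    rwa [← h2d, Function.iterate_succ_apply f _ x] at this
  · intro x
    have := hDid x
    rwa [← h2d, Function.iterate_succ_apply' f _ x] at this
end

section
/- Let A be a set, f : A → A, and x₁, u₁, x₂, u₂ ∈ A with f(x₁) ≠ f(x₂), u₁ ≠ u₂, and ⟨u₁ u₂⟩ ∘ f ∘ ⟨x₁ x₂⟩ = f. Then either (f⁻¹[{u₁}] = {x₁} and f⁻¹[{u₂}] = {x₂}) or (f⁻¹[{u₁}] = {x₂} and f⁻¹[{u₂}] = {x₁}). -/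
theorem stmt12 {A : Type*} [DecidableEq A] (f : A → A) (x₁ u₁ x₂ u₂ : A)
    (hx : f x₁ ≠ f x₂) (hu : u₁ ≠ u₂)
    (h : ⇑(Equiv.swap u₁ u₂) ∘ f ∘ ⇑(Equiv.swap x₁ x₂) = f) :
    (f ⁻¹' {u₁} = {x₁} ∧ f ⁻¹' {u₂} = {x₂}) ∨
      (f ⁻¹' {u₁} = {x₂} ∧ f ⁻¹' {u₂} = {x₁}) := by
  have h' : ∀ a, Equiv.swap u₁ u₂ (f (Equiv.swap x₁ x₂ a)) = f a := fun a => congrFun h a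
  have h1 : Equiv.swap u₁ u₂ (f x₂) = f x₁ := by simpa using h' x₁
  have h2 : Equiv.swap u₁ u₂ (f x₁) = f x₂ := by simpa using h' x₂
  have hfix : ∀ a, a ≠ x₁ → a ≠ x₂ → f a ≠ u₁ ∧ f a ≠ u₂ := by
    intro a ha1 ha2
    have hh := h' a
    rw [Equiv.swap_apply_of_ne_of_ne ha1 ha2] at hh
    constructor <;> intro hc <;> rw [hc] at hh <;> simp at hh
    · exact hu hh.symm
    · exact hu hh
  have hmem : f x₂ = u₁ ∨ f x₂ = u₂ := by
    by_contra hc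
    push_neg at hc
    rw [Equiv.swap_apply_of_ne_of_ne hc.1 hc.2] at h1
    exact hx h1.symm
  rcases hmem with hc | hc
  · right
    have hf1 : f x₁ = u₂ := by rw [hc] at h1; simpa using h1.symm
    constructor <;> ext a <;> simp only [Set.mem_preimage, Set.mem_singleton_iff]
    · constructor
      · intro ha
        by_contra hne
        rcases eq_or_ne a x₁ with rfl | h1'
        · exact hu (hf1.symm.trans ha).symm
        · exact (hfix a h1' hne).1 ha
      · rintro rfl; exact hc
    · constructor
      · intro ha
        by_contra hne
        rcases eq_or_ne a x₂ with rfl | h2'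
        · exact hu (hc.symm.trans ha)
        · exact (hfix a hne h2').2 ha
      · rintro rfl; exact hf1
  · left
    have hf1 : f x₁ = u₁ := by rw [hc] at h1; simpa using h1.symm
    constructor <;> ext a <;> simp only [Set.mem_preimage, Set.mem_singleton_iff]
    · constructor
      · intro ha
        by_contra hne
        rcases eq_or_ne a x₂ with rfl | h2'
        · exact hu (hc.symm.trans ha).symm
        · exact (hfix a hne h2').1 ha
      · rintro rfl; exact hf1
    · constructor
      · intro ha
        by_contra hne
        rcases eq_or_ne a x₁ with rfl | h1'
        · exact hu (hf1.symm.trans ha)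
        · exact (hfix a h1' hne).2 ha
      · rintro rfl; exact hc
end

section
/- Let S be a fully-transpositional semigroup on A with no constant function, f ∈ S, a ∈ A, and b = f(a). Suppose a ∈ Fxd-img(f) (i.e., f(b) = b). Then there exists z ∈ A with f(z) ≠ b, and for σ = ⟨b z⟩ we have a ∉ Fxd-img(σ ∘ f). Moreover, for every c ∈ [a]_f with c ≠ b and every z ∉ [a]_f, we have a ∈ Fxd-img(⟨c z⟩ ∘ f). -/
theorem stmt16 {A : Type*} [DecidableEq A] (S : Set (A → A))
    (hne : S.Nonempty)
    (hcomp : ∀ f ∈ S, ∀ g ∈ S, f ∘ g ∈ S)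
    (hFT : ∀ a b : A, a ≠ b → ⇑(Equiv.swap a b) ∈ S)
    (hnoconst : ∀ g ∈ S, ¬ ∃ c, ∀ x, g x = c)
    (f : A → A) (hf : f ∈ S) (a b : A) (hb : b = f a) (hfix : f b = b) :
    (∃ z : A, f z ≠ b ∧
        Equiv.swap b z (f (Equiv.swap b z (f a))) ≠ Equiv.swap b z (f a)) ∧
      ∀ c z : A, f c = f a → c ≠ b → f z ≠ f a →
        Equiv.swap c z (f (Equiv.swap c z (f a))) = Equiv.swap c z (f a) := by
  constructor
  · have h := hnoconst f hf
    push_neg at h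
    obtain ⟨z, hz⟩ := h b
    refine ⟨z, hz, ?_⟩
    have hzb : z ≠ b := fun h => hz (h ▸ hfix)
    rw [← hb, Equiv.swap_apply_left]
    intro h
    apply hz
    have := (Equiv.swap b z).injective (h.trans (Equiv.swap_apply_left b z).symm)
    exact this
  · intro c z hc hcb hz
    have hzb : z ≠ b := fun h => hz (by rw [h, hfix, hb])
    rw [← hb] at *
    have h1 : Equiv.swap c z b = b :=
      Equiv.swap_apply_of_ne_of_ne (Ne.symm hcb) (Ne.symm hzb)
    rw [h1, hfix, h1]
end

section
/- Let f : A → A, a ∈ A with a ∉ Fxd-img(f) and b = f(a). Then a ∈ Fxd-img(⟨a b⟩ ∘ f), and for every c ∈ A with c ≠ b, a ∉ Fxd-img(⟨a c⟩ ∘ f) (interpreting ⟨a c⟩ as the identity when a = c). -/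
theorem stmt17 {A : Type*} [DecidableEq A] (f : A → A) (a b : A)
    (ha : f (f a) ≠ f a) (hb : b = f a) :
    Equiv.swap a b (f (Equiv.swap a b (f a))) = Equiv.swap a b (f a) ∧
      ∀ c : A, c ≠ b →
        Equiv.swap a c (f (Equiv.swap a c (f a))) ≠ Equiv.swap a c (f a) := by
  subst hb
  have hba : f a ≠ a := fun h => ha (by rw [h, h])
  constructor
  · rw [Equiv.swap_apply_right, Equiv.swap_apply_right]
  · intro c hc
    rcases eq_or_ne c a with rfl | hca
    · simpa using ha
    · have h1 : Equiv.swap a c (f a) = f a :=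
        Equiv.swap_apply_of_ne_of_ne hba (Ne.symm hc)
      rw [h1]
      intro h
      have : f (f a) = f a := by
        have := congrArg (Equiv.swap a c) h
        rwa [Equiv.swap_apply_self, h1] at this
      exact ha this
end
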